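/- Let H be a subcontinuum of the inverse limit X of a unimodal map T. If there exists k ∈ ℕ such that the critical point c does not belong to π_i(H) for all i > k, then H is either a single point or an arc. -/

import Mathlib

open Set Filter Topology

/-- A unimodal map on `[0,1]` with critical point `c = 1/2`. -/
def IsUnimodal (T : ℝ → ℝ) : Prop :=
  ContinuousOn T (Set.Icc 0 1) ∧ Set.MapsTo T (Set.Icc 0 1) (Set.Icc 0 1) ∧
    StrictMonoOn T (Set.Icc 0 (1/2)) ∧ StrictAntiOn T (Set.Icc (1/2) 1)

/-- The inverse limit `lim←(K, T)`, as the space of backward orbits. -/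
abbrev InvLim (T : ℝ → ℝ) (K : Set ℝ) :=
  {x : ℕ → ℝ // (∀ n, x n ∈ K) ∧ ∀ n, T (x (n + 1)) = x n}

/-- A subset of a topological space is an arc if it is the image of `[0,1]` under a
topological embedding. -/
def IsArc {Z : Type*} [TopologicalSpace Z] (A : Set Z) : Prop :=
  ∃ f : Set.Icc (0:ℝ) 1 → Z, Topology.IsEmbedding f ∧ Set.range f = A

/-- Let `H` be a subcontinuum of the inverse limit `X` of a unimodal map
`T`.  If there is `k` such that the critical point `c` does not belong to `π_i(H)` for all
`i > k`, then `H` is a single point or an arc. -/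
theorem stmt6 (T : ℝ → ℝ) (hT : IsUnimodal T)
    (H : Set (InvLim T (Set.Icc 0 1))) (hne : H.Nonempty)
    (hcomp : IsCompact H) (hconn : IsConnected H)
    (hk : ∃ k : ℕ, ∀ i, k < i →
      (1:ℝ)/2 ∉ (fun x : InvLim T (Set.Icc 0 1) => x.1 i) '' H) :
    (∃ a, H = {a}) ∨ IsArc H := by
  obtain ⟨hTc, hTm, hmono, hanti⟩ := hT
  obtain ⟨k, hk⟩ := hk
  set p : InvLim T (Set.Icc 0 1) → ℝ := fun x => x.1 (k + 1) with hpdef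
  have hpc : Continuous p := (continuous_apply (k + 1)).comp continuous_subtype_val
  -- each projection with index > k lies entirely on one side of 1/2
  have hsides : ∀ i, k < i → (∀ x ∈ H, x.1 i ∈ Set.Icc (0:ℝ) (1/2)) ∨
      (∀ x ∈ H, x.1 i ∈ Set.Icc ((1:ℝ)/2) 1) := by
    intro i hi
    have hcont : Continuous (fun x : InvLim T (Set.Icc 0 1) => x.1 i) :=
      (continuous_apply i).comp continuous_subtype_val
    have hconn' := hconn.image _ hcont.continuousOn
    have hsub : (fun x : InvLim T (Set.Icc 0 1) => x.1 i) '' H ⊆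
        Set.Iio (1/2) ∪ Set.Ioi (1/2) := by
      intro t ht
      rcases lt_trichotomy t (1/2) with h | h | h
      · exact Or.inl h
      · exact absurd (h ▸ ht) (hk i hi)
      · exact Or.inr h
    have hdisj : Disjoint (Set.Iio ((1:ℝ)/2)) (Set.Ioi ((1:ℝ)/2)) := by
      rw [Set.disjoint_left]; intro t h1 h2; exact absurd (h1.trans h2) (lt_irrefl t)
    rcases hconn'.isPreconnected.subset_or_subset isOpen_Iio isOpen_Ioi hdisj hsub with h | h
    · exact Or.inl fun x hx => ⟨(x.2.1 i).1, le_of_lt (h ⟨x, hx, rfl⟩)⟩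
    · exact Or.inr fun x hx => ⟨le_of_lt (h ⟨x, hx, rfl⟩), (x.2.1 i).2⟩
  -- step of injectivity
  have hinjT : ∀ i, k < i → ∀ x ∈ H, ∀ y ∈ H, x.1 i = y.1 i → x.1 (i + 1) = y.1 (i + 1) := by
    intro i hi x hx y hy hxy
    have hTeq : T (x.1 (i + 1)) = T (y.1 (i + 1)) := by rw [x.2.2 i, y.2.2 i, hxy]
    rcases hsides (i + 1) (hi.trans (Nat.lt_succ_self i)) with h | h
    · exact hmono.injOn (h x hx) (h y hy) hTeq
    · exact hanti.injOn (h x hx) (h y hy) hTeq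
  -- earlier coordinates are iterates of later ones
  have hiter : ∀ (z : InvLim T (Set.Icc 0 1)) (d n : ℕ), z.1 n = T^[d] (z.1 (n + d)) := by
    intro z d
    induction d with
    | zero => intro n; rfl
    | succ d ih =>
      intro n
      calc z.1 n = T^[d] (z.1 (n + d)) := ih n
        _ = T^[d] (T (z.1 (n + d + 1))) := by rw [z.2.2 (n + d)]
        _ = T^[d + 1] (z.1 (n + (d + 1))) := (Function.iterate_succ_apply T d _).symm
  -- p is injective on H
  have hinj : Set.InjOn p H := by
    intro x hx y hy hpxy
    have hup : ∀ j, x.1 (k + 1 + j) = y.1 (k + 1 + j) := by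
      intro j
      induction j with
      | zero => exact hpxy
      | succ j ih => exact hinjT (k + 1 + j) (by omega) x hx y hy ih
    refine Subtype.ext (funext fun n => ?_)
    by_cases hn : k + 1 ≤ n
    · obtain ⟨j, rfl⟩ := Nat.exists_eq_add_of_le hn
      exact hup j
    · have hx' := hiter x (k + 1 - n) n
      have hy' := hiter y (k + 1 - n) n
      rw [show n + (k + 1 - n) = k + 1 by omega] at hx' hy'
      rw [hx', hy', show x.1 (k+1) = y.1 (k+1) from hpxy]
  haveI : CompactSpace ↥H := isCompact_iff_compactSpace.mp hcomp
  set e : ↥H → ℝ := fun x => p x.1 with hedef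
  have hec : Continuous e := hpc.comp continuous_subtype_val
  have hei : Function.Injective e := fun x y h => Subtype.ext (hinj x.2 y.2 h)
  have hemb := hec.isClosedEmbedding hei
  have hrange : Set.range e = p '' H := (Set.image_eq_range p H).symm
  set s : Set ℝ := p '' H with hsdef
  have hsne : s.Nonempty := hne.image p
  have hsc : IsCompact s := hcomp.image hpc
  have hsconn : IsConnected s := hconn.image p hpc.continuousOn
  have hs_eq : s = Set.Icc (sInf s) (sSup s) := eq_Icc_of_connected_compact hsconn hsc
  rcases eq_or_lt_of_le (csInf_le_csSup hsne hsc.bddBelow hsc.bddAbove) with heq | hlt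
  · -- single point
    obtain ⟨a0, ha0⟩ := hne
    left
    refine ⟨a0, Set.eq_singleton_iff_unique_mem.mpr ⟨ha0, fun x hx => ?_⟩⟩
    have h1 : p x ∈ s := ⟨x, hx, rfl⟩
    have h2 : p a0 ∈ s := ⟨a0, ha0, rfl⟩
    rw [hs_eq, ← heq, Set.Icc_self] at h1 h2
    exact hinj hx ha0 (h1.trans h2.symm)
  · -- arc
    right
    have hseq : Set.Icc (sInf s) (sSup s) = Set.range e := by rw [← hs_eq, ← hrange]
    let φ : Set.Icc (0:ℝ) 1 ≃ₜ Set.Icc (sInf s) (sSup s) := (iccHomeoI (sInf s) (sSup s) hlt).symm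
    let ψ : Set.Icc (sInf s) (sSup s) ≃ₜ Set.range e := Homeomorph.setCongr hseq
    let χ : Set.range e ≃ₜ ↥H := (hemb.isEmbedding.toHomeomorph).symm
    refine ⟨fun t => (χ (ψ (φ t)) : InvLim T (Set.Icc 0 1)), ?_, ?_⟩
    · exact Topology.IsEmbedding.subtypeVal.comp
        (χ.isEmbedding.comp (ψ.isEmbedding.comp φ.isEmbedding))
    · have hsurj : Function.Surjective (fun t => χ (ψ (φ t))) :=
        χ.surjective.comp (ψ.surjective.comp φ.surjective)
      have : (fun t => (χ (ψ (φ t)) : InvLim T (Set.Icc 0 1))) =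
          Subtype.val ∘ (fun t => χ (ψ (φ t))) := rfl
      rw [this, Set.range_comp, Set.range_eq_univ.mpr hsurj, Set.image_univ,
        Subtype.range_coe]
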